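/- Let N ≥ 1 be an integer, let γ ≥ 1 and B > 0 be real numbers, and let ξ_1, …, ξ_N and ω_1, …, ω_N be positive real numbers satisfying ∑_{i=1}^N ω_i ξ_i^γ ≤ B. Then ∑_{i=1}^N 1/ξ_i ≥ B^{−1/γ} (∑_{i=1}^N ω_i^{1/(1+γ)})^{(1+γ)/γ}. -/

import Mathlib

theorem stmt_0 (N : ℕ) (hN : 1 ≤ N) (γ B : ℝ) (hγ : 1 ≤ γ) (hB : 0 < B)
    (ξ ω : ℕ → ℝ) (hξ : ∀ i ∈ Finset.range N, 0 < ξ i)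
    (hω : ∀ i ∈ Finset.range N, 0 < ω i)
    (hsum : ∑ i ∈ Finset.range N, ω i * ξ i ^ γ ≤ B) :
    ∑ i ∈ Finset.range N, 1 / ξ i ≥
      B ^ (-(1 / γ)) * (∑ i ∈ Finset.range N, ω i ^ (1 / (1 + γ))) ^ ((1 + γ) / γ) := by
  have hγ0 : 0 < γ := lt_of_lt_of_le one_pos hγ
  have hp0 : (0:ℝ) < 1 + γ := by linarith
  have hq0 : (0:ℝ) < (1 + γ) / γ := by positivity
  have hpq : (1 + γ).HolderConjugate ((1 + γ) / γ) := by
    constructor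
    · rw [inv_one, inv_div, ← one_div, ← add_div, div_self hp0.ne']
    · linarith
    · exact hq0
  set s := Finset.range N with hs
  set S := ∑ i ∈ s, 1 / ξ i with hS
  set T := ∑ i ∈ s, ω i ^ (1 / (1 + γ)) with hT
  set A := ∑ i ∈ s, ω i * ξ i ^ γ with hA
  have hSnn : 0 ≤ S := Finset.sum_nonneg fun i hi => one_div_nonneg.mpr (hξ i hi).le
  have hTnn : 0 ≤ T := Finset.sum_nonneg fun i hi =>
    Real.rpow_nonneg (hω i hi).le _
  have hAnn : 0 ≤ A := Finset.sum_nonneg fun i hi =>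
    mul_nonneg (hω i hi).le (Real.rpow_nonneg (hξ i hi).le _)
  -- Hölder
  have hHold := Real.inner_le_Lp_mul_Lq_of_nonneg (s := s) hpq
      (f := fun i => (ω i * ξ i ^ γ) ^ (1 / (1 + γ)))
      (g := fun i => (1 / ξ i) ^ (γ / (1 + γ)))
      (fun i hi => Real.rpow_nonneg
        (mul_nonneg (hω i hi).le (Real.rpow_nonneg (hξ i hi).le γ)) _)
      (fun i hi => Real.rpow_nonneg (one_div_nonneg.mpr (hξ i hi).le) _)
  have key : T ≤ A ^ (1 / (1 + γ)) * S ^ (γ / (1 + γ)) := by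
    have e1 : ∀ i ∈ s, (ω i * ξ i ^ γ) ^ (1 / (1 + γ)) * (1 / ξ i) ^ (γ / (1 + γ))
        = ω i ^ (1 / (1 + γ)) := by
      intro i hi
      have hξi := hξ i hi
      rw [Real.mul_rpow (hω i hi).le (Real.rpow_nonneg hξi.le γ),
        ← Real.rpow_mul hξi.le, one_div (ξ i), ← Real.rpow_neg_one (ξ i),
        ← Real.rpow_mul hξi.le, mul_assoc, ← Real.rpow_add hξi]
      have : γ * (1 / (1 + γ)) + -1 * (γ / (1 + γ)) = 0 := by ring
      rw [this, Real.rpow_zero, mul_one]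
    have e2 : ∀ i ∈ s, ((ω i * ξ i ^ γ) ^ (1 / (1 + γ))) ^ (1 + γ) = ω i * ξ i ^ γ := by
      intro i hi
      rw [← Real.rpow_mul
        (mul_nonneg (hω i hi).le (Real.rpow_nonneg (hξ i hi).le γ)),
        one_div_mul_cancel hp0.ne', Real.rpow_one]
    have e3 : ∀ i ∈ s, ((1 / ξ i) ^ (γ / (1 + γ))) ^ ((1 + γ) / γ) = 1 / ξ i := by
      intro i hi
      have hξi := hξ i hi
      rw [← Real.rpow_mul (by positivity)]
      have : γ / (1 + γ) * ((1 + γ) / γ) = 1 := by field_simp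
      rw [this, Real.rpow_one]
    rw [Finset.sum_congr rfl e1, Finset.sum_congr rfl e2, Finset.sum_congr rfl e3] at hHold
    simpa only [one_div_div] using hHold
  -- Use A ≤ B
  have key2 : T ≤ B ^ (1 / (1 + γ)) * S ^ (γ / (1 + γ)) :=
    key.trans (mul_le_mul_of_nonneg_right
      (Real.rpow_le_rpow hAnn hsum (by positivity)) (Real.rpow_nonneg hSnn _))
  -- raise to power (1+γ)/γ
  have key3 : T ^ ((1 + γ) / γ) ≤ B ^ (1 / γ) * S := by
    have := Real.rpow_le_rpow hTnn key2 hq0.le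
    rw [Real.mul_rpow (Real.rpow_nonneg hB.le _) (Real.rpow_nonneg hSnn _),
      ← Real.rpow_mul hB.le, ← Real.rpow_mul hSnn] at this
    have e4 : 1 / (1 + γ) * ((1 + γ) / γ) = 1 / γ := by field_simp
    have e5 : γ / (1 + γ) * ((1 + γ) / γ) = 1 := by field_simp
    rwa [e4, e5, Real.rpow_one] at this
  have hBpos : (0:ℝ) < B ^ (-(1 / γ)) := Real.rpow_pos_of_pos hB _
  rw [ge_iff_le, ← le_div_iff₀' hBpos] at *
  calc T ^ ((1 + γ) / γ) ≤ B ^ (1 / γ) * S := key3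
    _ = S / B ^ (-(1 / γ)) := by
        rw [Real.rpow_neg hB.le]; field_simp
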